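/- Let T be a tree of diameter at most 3 and let λ be a nonzero eigenvalue of the adjacency matrix of T. Then for every vertex v of T, λ is not an eigenvalue of the adjacency matrix of T − v. -/

import Mathlib

open Module

attribute [local instance] Classical.propDecidable

noncomputable def adjMat {V : Type*} [Fintype V] (G : SimpleGraph V) : Matrix V V ℝ :=
  Matrix.of fun u v => if G.Adj u v then 1 else 0

noncomputable def eigMult {V : Type*} [Fintype V] (G : SimpleGraph V) (μ : ℝ) : ℕ :=
  Module.finrank ℝ (Module.End.eigenspace (adjMat G).mulVecLin μ)

def HasEig {V : Type*} [Fintype V] (G : SimpleGraph V) (μ : ℝ) : Prop :=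
  Module.End.HasEigenvalue (adjMat G).mulVecLin μ

def IsMatchingSet {V : Type*} (G : SimpleGraph V) (M : Finset (Sym2 V)) : Prop :=
  (∀ e ∈ M, e ∈ G.edgeSet) ∧
  ∀ e ∈ M, ∀ f ∈ M, e ≠ f → ∀ v, v ∈ e → v ∉ f

def IsInducedMatchingSet {V : Type*} (G : SimpleGraph V) (M : Finset (Sym2 V)) : Prop :=
  IsMatchingSet G M ∧
  ∀ e ∈ M, ∀ f ∈ M, e ≠ f → ∀ u v, u ∈ e → v ∈ f → ¬ G.Adj u v

noncomputable def matchNum {V : Type*} [Fintype V] (G : SimpleGraph V) : ℕ :=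
  sSup {k | ∃ M, IsMatchingSet G M ∧ M.card = k}

noncomputable def indMatchNum {V : Type*} [Fintype V] (G : SimpleGraph V) : ℕ :=
  sSup {k | ∃ M, IsInducedMatchingSet G M ∧ M.card = k}

noncomputable def cyclomatic {V : Type*} [Fintype V] (G : SimpleGraph V) : ℕ :=
  G.edgeSet.ncard + 1 - Fintype.card V

def delV {V : Type*} (G : SimpleGraph V) (v : V) : SimpleGraph {u : V // u ≠ v} :=
  G.induce {u : V | u ≠ v}

def starGraph (n : ℕ) : SimpleGraph (Fin (n + 1)) :=
  SimpleGraph.fromRel (fun u _ => u = 0)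

def triStar (a : ℕ) : SimpleGraph (Fin 3 ⊕ Fin 3 × Fin a) :=
  SimpleGraph.fromRel (fun x y =>
    (∃ i j, x = Sum.inl i ∧ y = Sum.inl j) ∨
    (∃ i k, x = Sum.inl i ∧ y = Sum.inr (i, k)))

open SimpleGraph

section Aux

/-! ### Spectral helper lemmas -/

lemma eig_exists {V : Type*} [Fintype V] {G : SimpleGraph V} {μ : ℝ} (h : HasEig G μ) :
    ∃ x : V → ℝ, x ≠ 0 ∧ ∀ u : V, ∑ w, (if G.Adj u w then (1:ℝ) else 0) * x w = μ * x u := by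
  obtain ⟨x, hx1, hx2⟩ := h.exists_hasEigenvector
  refine ⟨x, hx2, fun u => ?_⟩
  have := Module.End.mem_eigenspace_iff.mp hx1
  have h3 := congrFun this u
  simpa [Matrix.mulVecLin, Matrix.mulVec, dotProduct, adjMat] using h3

lemma no_edges_no_eig {V : Type*} [Fintype V] {G : SimpleGraph V}
    (hG : ∀ u w, ¬ G.Adj u w) {μ : ℝ} (hμ : μ ≠ 0) : ¬ HasEig G μ := by
  intro h
  obtain ⟨x, hx, he⟩ := eig_exists h
  apply hx
  funext u
  have := he u
  simp only [hG, if_false, zero_mul, Finset.sum_const_zero] at this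
  have : x u = 0 := by
    field_simp at this
    exact (mul_eq_zero.mp this.symm).resolve_left hμ
  simpa using this

noncomputable def lvs {V : Type*} [Fintype V] (G : SimpleGraph V) (c1 c2 : V) : Finset V :=
  Finset.univ.filter (fun u => u ≠ c1 ∧ u ≠ c2 ∧ G.Adj u c1)

lemma leaf_eq {V : Type*} [Fintype V] {G : SimpleGraph V} {c1 c2 : V}
    (hcov : ∀ a b, G.Adj a b → a = c1 ∨ a = c2 ∨ b = c1 ∨ b = c2)
    (hnc : ∀ u, G.Adj u c1 → G.Adj u c2 → False)
    {μ : ℝ} {x : V → ℝ}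
    (he : ∀ u, ∑ w, (if G.Adj u w then (1:ℝ) else 0) * x w = μ * x u) :
    ∀ u ∈ lvs G c1 c2, μ * x u = x c1 := by
  intro u hu
  simp only [lvs, Finset.mem_filter, Finset.mem_univ, true_and] at hu
  obtain ⟨h1, h2, h3⟩ := hu
  have key : ∀ w, G.Adj u w ↔ w = c1 := by
    intro w
    constructor
    · intro haw
      rcases hcov u w haw with h | h | h | h
      · exact absurd h h1
      · exact absurd h h2
      · exact h
      · exact absurd h3 (fun hh => hnc u hh (h ▸ haw))
    · rintro rfl; exact h3
  have := he u
  rw [← this]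
  have : ∀ w : V, (if G.Adj u w then (1:ℝ) else 0) * x w = if w = c1 then x w else 0 := by
    intro w; simp [key w]
  rw [Finset.sum_congr rfl (fun w _ => this w)]
  simp

lemma center_eq {V : Type*} [Fintype V] {G : SimpleGraph V} {c1 c2 : V}
    (hadj : G.Adj c1 c2)
    (hcov : ∀ a b, G.Adj a b → a = c1 ∨ a = c2 ∨ b = c1 ∨ b = c2)
    (hnc : ∀ u, G.Adj u c1 → G.Adj u c2 → False)
    {μ : ℝ} {x : V → ℝ}
    (he : ∀ u, ∑ w, (if G.Adj u w then (1:ℝ) else 0) * x w = μ * x u) :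
    μ^2 * x c1 = ((lvs G c1 c2).card : ℝ) * x c1 + μ * x c2 := by
  have hfil : Finset.univ.filter (fun w => G.Adj c1 w) = insert c2 (lvs G c1 c2) := by
    ext w
    simp only [Finset.mem_filter, Finset.mem_univ, true_and, Finset.mem_insert, lvs]
    constructor
    · intro haw
      by_cases hw2 : w = c2
      · exact Or.inl hw2
      · right
        refine ⟨fun hh => G.irrefl (hh ▸ haw), hw2, haw.symm⟩
    · rintro (rfl | ⟨h1, h2, h3⟩)
      · exact hadj
      · exact h3.symm
  have hc2 : c2 ∉ lvs G c1 c2 := by simp [lvs]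
  have hsum := he c1
  have : ∀ w : V, (if G.Adj c1 w then (1:ℝ) else 0) * x w = if G.Adj c1 w then x w else 0 := by
    intro w; split <;> simp
  rw [Finset.sum_congr rfl (fun w _ => this w), ← Finset.sum_filter, hfil,
    Finset.sum_insert hc2] at hsum
  have hleaf := leaf_eq hcov hnc he
  have hsl : μ * ∑ u ∈ lvs G c1 c2, x u = ((lvs G c1 c2).card : ℝ) * x c1 := by
    rw [Finset.mul_sum, Finset.sum_congr rfl hleaf]
    simp [mul_comm]
  have := congrArg (fun t => μ * t) hsum
  simp only [mul_add] at this
  rw [hsl] at this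
  nlinarith [this]

lemma cov_swap {V : Type*} {G : SimpleGraph V} {c1 c2 : V}
    (hcov : ∀ a b, G.Adj a b → a = c1 ∨ a = c2 ∨ b = c1 ∨ b = c2) :
    ∀ a b, G.Adj a b → a = c2 ∨ a = c1 ∨ b = c2 ∨ b = c1 := by
  intro a b hab; rcases hcov a b hab with h | h | h | h <;> tauto

lemma nc_swap {V : Type*} {G : SimpleGraph V} {c1 c2 : V}
    (hnc : ∀ u, G.Adj u c1 → G.Adj u c2 → False) :
    ∀ u, G.Adj u c2 → G.Adj u c1 → False := fun u h1 h2 => hnc u h2 h1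

lemma nonvanish {V : Type*} [Fintype V] {G : SimpleGraph V} {c1 c2 : V}
    (hcov : ∀ a b, G.Adj a b → a = c1 ∨ a = c2 ∨ b = c1 ∨ b = c2)
    (hnc : ∀ u, G.Adj u c1 → G.Adj u c2 → False)
    {μ : ℝ} {x : V → ℝ} (hμ : μ ≠ 0) (hx : x ≠ 0)
    (he : ∀ u, ∑ w, (if G.Adj u w then (1:ℝ) else 0) * x w = μ * x u) :
    x c1 ≠ 0 ∨ x c2 ≠ 0 := by
  by_contra hcon
  push_neg at hcon
  obtain ⟨h1, h2⟩ := hcon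
  apply hx
  funext u
  show x u = 0
  by_cases hu1 : u = c1
  · rwa [hu1]
  by_cases hu2 : u = c2
  · rwa [hu2]
  by_cases ha1 : G.Adj u c1
  · have hmem : u ∈ lvs G c1 c2 := by simp [lvs, hu1, hu2, ha1]
    have := leaf_eq hcov hnc he u hmem
    rw [h1] at this
    exact (mul_eq_zero.mp this).resolve_left hμ
  by_cases ha2 : G.Adj u c2
  · have hmem : u ∈ lvs G c2 c1 := by simp [lvs, hu1, hu2, ha2]
    have := leaf_eq (cov_swap hcov) (nc_swap hnc) he u hmem
    rw [h2] at this
    exact (mul_eq_zero.mp this).resolve_left hμ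
  · have hiso : ∀ w, ¬ G.Adj u w := by
      intro w haw
      rcases hcov u w haw with h | h | h | h
      · exact hu1 h
      · exact hu2 h
      · exact ha1 (h ▸ haw)
      · exact ha2 (h ▸ haw)
    have := he u
    simp only [hiso, if_false, zero_mul, Finset.sum_const_zero] at this
    exact ((mul_eq_zero.mp this.symm).resolve_left hμ)

lemma struct_eig {V : Type*} [Fintype V] {G : SimpleGraph V} {c1 c2 : V}
    (hadj : G.Adj c1 c2)
    (hcov : ∀ a b, G.Adj a b → a = c1 ∨ a = c2 ∨ b = c1 ∨ b = c2)
    (hnc : ∀ u, G.Adj u c1 → G.Adj u c2 → False)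
    {μ : ℝ} (hμ : μ ≠ 0) (h : HasEig G μ) :
    (μ^2 - ((lvs G c1 c2).card : ℝ)) * (μ^2 - ((lvs G c2 c1).card : ℝ)) = μ^2 := by
  obtain ⟨x, hx, he⟩ := eig_exists h
  set a : ℝ := ((lvs G c1 c2).card : ℝ)
  set b : ℝ := ((lvs G c2 c1).card : ℝ)
  have r1 : μ^2 * x c1 = a * x c1 + μ * x c2 := center_eq hadj hcov hnc he
  have r2 : μ^2 * x c2 = b * x c2 + μ * x c1 := center_eq hadj.symm (cov_swap hcov) (nc_swap hnc) he
  have k1 : ((μ^2 - a) * (μ^2 - b) - μ^2) * x c1 = 0 := by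
    linear_combination (μ^2 - b) * r1 + μ * r2
  have k2 : ((μ^2 - a) * (μ^2 - b) - μ^2) * x c2 = 0 := by
    linear_combination (μ^2 - a) * r2 + μ * r1
  rcases nonvanish hcov hnc hμ hx he with hnz | hnz
  · have := (mul_eq_zero.mp k1).resolve_right hnz
    linarith
  · have := (mul_eq_zero.mp k2).resolve_right hnz
    linarith

/-! ### Graph-theoretic helper lemmas -/

lemma path_len_eq_dist {V : Type*} {G : SimpleGraph V} (hG : G.IsAcyclic) {u v : V}
    (p : G.Walk u v) (hp : p.IsPath) : p.length = G.dist u v := by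
  have hr : G.Reachable u v := ⟨p⟩
  obtain ⟨q, hq⟩ := hr.exists_walk_length_eq_dist
  have h1 : (⟨p, hp⟩ : G.Path u v) = q.toPath := hG.path_unique _ _
  have h2 : p.length = q.bypass.length := by
    have := congrArg (fun r : G.Path u v => (r : G.Walk u v).length) h1
    simpa [SimpleGraph.Walk.toPath] using this
  have h3 : q.bypass.length ≤ q.length := SimpleGraph.Walk.length_bypass_le q
  have h4 : G.dist u v ≤ p.length := SimpleGraph.dist_le p
  omega

lemma path2 {V : Type*} {T : SimpleGraph V} (hac : T.IsAcyclic) {a b c : V}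
    (h1 : T.Adj a b) (h2 : T.Adj b c) (hac' : a ≠ c) : T.dist a c = 2 := by
  have hp : (SimpleGraph.Walk.cons h1 (SimpleGraph.Walk.cons h2 SimpleGraph.Walk.nil)).IsPath := by
    simp [SimpleGraph.Walk.cons_isPath_iff, h1.ne, h2.ne, hac']
  have := path_len_eq_dist hac _ hp
  simpa using this.symm

lemma path3 {V : Type*} {T : SimpleGraph V} (hac : T.IsAcyclic) {a b c d : V}
    (h1 : T.Adj a b) (h2 : T.Adj b c) (h3 : T.Adj c d)
    (hac' : a ≠ c) (had : a ≠ d) (hbd : b ≠ d) : T.dist a d = 3 := by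
  have hp : (SimpleGraph.Walk.cons h1 (SimpleGraph.Walk.cons h2
      (SimpleGraph.Walk.cons h3 SimpleGraph.Walk.nil))).IsPath := by
    simp [SimpleGraph.Walk.cons_isPath_iff, h1.ne, h2.ne, h3.ne, hac', had, hbd]
  have := path_len_eq_dist hac _ hp
  simpa using this.symm

lemma path4 {V : Type*} {T : SimpleGraph V} (hac : T.IsAcyclic) {a b c d e : V}
    (h1 : T.Adj a b) (h2 : T.Adj b c) (h3 : T.Adj c d) (h4 : T.Adj d e)
    (hac' : a ≠ c) (had : a ≠ d) (hae : a ≠ e) (hbd : b ≠ d) (hbe : b ≠ e) (hce : c ≠ e) :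
    T.dist a e = 4 := by
  have hp : (SimpleGraph.Walk.cons h1 (SimpleGraph.Walk.cons h2
      (SimpleGraph.Walk.cons h3 (SimpleGraph.Walk.cons h4 SimpleGraph.Walk.nil)))).IsPath := by
    simp [SimpleGraph.Walk.cons_isPath_iff, h1.ne, h2.ne, h3.ne, h4.ne, hac', had, hae, hbd,
      hbe, hce]
  have := path_len_eq_dist hac _ hp
  simpa using this.symm

lemma no_triangle {V : Type*} {T : SimpleGraph V} (hac : T.IsAcyclic) {a b c : V}
    (h1 : T.Adj a b) (h2 : T.Adj b c) (h3 : T.Adj a c) : False := by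
  have := path2 hac h1 h2 h3.ne
  rw [SimpleGraph.dist_eq_one_iff_adj.mpr h3] at this
  simp at this

lemma no_c4 {V : Type*} {T : SimpleGraph V} (hac : T.IsAcyclic) {a b c d : V}
    (h1 : T.Adj a b) (h2 : T.Adj b c) (h3 : T.Adj c d) (h4 : T.Adj a d)
    (hac' : a ≠ c) (hbd : b ≠ d) : False := by
  have := path3 hac h1 h2 h3 hac' h4.ne hbd
  rw [SimpleGraph.dist_eq_one_iff_adj.mpr h4] at this
  simp at this

lemma delV_adj {V : Type*} {G : SimpleGraph V} {v : V} {x y : {u : V // u ≠ v}} :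
    (delV G v).Adj x y ↔ G.Adj x.val y.val := by
  simp [delV]

lemma card_filter_ext {α : Type*} [Fintype α] {p q : α → Prop} {ip : DecidablePred p}
    {iq : DecidablePred q} (h : ∀ x, p x ↔ q x) :
    (@Finset.filter α p ip Finset.univ).card = (@Finset.filter α q iq Finset.univ).card := by
  congr 1
  ext x
  simp only [Finset.mem_filter, Finset.mem_univ, true_and, h x]

lemma card_filter_subtype {V : Type*} [Fintype V] (v : V) (P : V → Prop)
    [DecidablePred (fun u : {u : V // u ≠ v} => P u.val)]
    [DecidablePred (fun u : V => u ≠ v ∧ P u)] :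
    (Finset.univ.filter (fun u : {u : V // u ≠ v} => P u.val)).card
      = (Finset.univ.filter (fun u : V => u ≠ v ∧ P u)).card := by
  apply Finset.card_bij (fun u _ => u.val)
  · intro a ha
    simp only [Finset.mem_filter, Finset.mem_univ, true_and] at ha ⊢
    exact ⟨a.prop, ha⟩
  · intro a ha b hb hab
    exact Subtype.ext hab
  · intro b hb
    simp only [Finset.mem_filter, Finset.mem_univ, true_and] at hb
    exact ⟨⟨b, hb.1⟩, by simp [hb.2], rfl⟩

lemma lvs_delV_card {V : Type*} [Fintype V] (G : SimpleGraph V) (v c1 c2 : V)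
    (hc1 : c1 ≠ v) (hc2 : c2 ≠ v) :
    (lvs (delV G v) ⟨c1, hc1⟩ ⟨c2, hc2⟩).card
      = (Finset.univ.filter (fun u : V => u ≠ v ∧ u ≠ c1 ∧ u ≠ c2 ∧ G.Adj u c1)).card := by
  unfold lvs
  have h1 := card_filter_subtype (V := V) v (fun u => u ≠ c1 ∧ u ≠ c2 ∧ G.Adj u c1)
  refine Eq.trans ?_ (Eq.trans h1 ?_)
  · refine card_filter_ext (fun u => ?_)
    have e1 : (u ≠ (⟨c1, hc1⟩ : {u : V // u ≠ v})) ↔ u.val ≠ c1 := not_congr Subtype.ext_iff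
    have e2 : (u ≠ (⟨c2, hc2⟩ : {u : V // u ≠ v})) ↔ u.val ≠ c2 := not_congr Subtype.ext_iff
    rw [e1, e2, delV_adj]
  · exact card_filter_ext (fun u => by tauto)

lemma walk_len2 {V : Type*} {T : SimpleGraph V} {u v : V} (p : T.Walk u v) (h : p.length = 2) :
    ∃ w, T.Adj u w ∧ T.Adj w v := by
  cases p with
  | nil => simp at h
  | cons h1 q =>
    cases q with
    | nil => simp at h
    | cons h2 r =>
      cases r with
      | nil => exact ⟨_, h1, h2⟩
      | cons h3 s => simp [SimpleGraph.Walk.length_cons] at h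

lemma walk_len3 {V : Type*} {T : SimpleGraph V} {u v : V} (p : T.Walk u v) (h : p.length = 3) :
    ∃ w1 w2, T.Adj u w1 ∧ T.Adj w1 w2 ∧ T.Adj w2 v := by
  cases p with
  | nil => simp at h
  | cons h1 q =>
    cases q with
    | nil => simp at h
    | cons h2 r =>
      cases r with
      | nil => simp at h
      | cons h3 s =>
        cases s with
        | nil => exact ⟨_, _, h1, h2, h3⟩
        | cons h4 t => simp [SimpleGraph.Walk.length_cons] at h

end Aux
lemma classify {V : Type*} [Fintype V] {T : SimpleGraph V} (hc : T.Connected) (hac : T.IsAcyclic)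
    (hd : ∀ u v : V, T.dist u v ≤ 3) {a0 b0 : V} (hab : T.Adj a0 b0) :
    ∃ c1 c2, T.Adj c1 c2 ∧ ∀ a b, T.Adj a b → a = c1 ∨ a = c2 ∨ b = c1 ∨ b = c2 := by
  obtain ⟨⟨u0, v0⟩, -, hmax⟩ := Finset.exists_max_image (Finset.univ : Finset (V × V))
    (fun p => T.dist p.1 p.2) ⟨(a0, b0), Finset.mem_univ _⟩
  have hmax' : ∀ p q : V, T.dist p q ≤ T.dist u0 v0 := fun p q => hmax (p, q) (Finset.mem_univ _)
  have hd1 : 1 ≤ T.dist u0 v0 := by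
    have := hmax' a0 b0
    rw [SimpleGraph.dist_eq_one_iff_adj.mpr hab] at this
    exact this
  have hd3 : T.dist u0 v0 ≤ 3 := hd u0 v0
  have hkey : T.dist u0 v0 = 1 ∨ T.dist u0 v0 = 2 ∨ T.dist u0 v0 = 3 := by omega
  rcases hkey with hk | hk | hk
  · -- diameter 1
    have hadj : T.Adj u0 v0 := SimpleGraph.dist_eq_one_iff_adj.mp hk
    refine ⟨u0, v0, hadj, ?_⟩
    intro a b hab2
    by_contra hcon
    push_neg at hcon
    obtain ⟨ha1, ha2, hb1, hb2⟩ := hcon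
    have hau : T.Adj u0 a := by
      have h1 : T.dist u0 a ≤ 1 := hk ▸ hmax' u0 a
      have h2 : 1 ≤ T.dist u0 a := hc.pos_dist_of_ne (Ne.symm ha1)
      exact SimpleGraph.dist_eq_one_iff_adj.mp (le_antisymm h1 h2)
    have hav : T.Adj a v0 := by
      have h1 : T.dist v0 a ≤ 1 := hk ▸ hmax' v0 a
      have h2 : 1 ≤ T.dist v0 a := hc.pos_dist_of_ne (Ne.symm ha2)
      exact (SimpleGraph.dist_eq_one_iff_adj.mp (le_antisymm h1 h2)).symm
    exact no_triangle hac hau hav hadj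
  · -- diameter 2
    obtain ⟨p, hp, hlen⟩ := hc.exists_path_of_dist u0 v0
    rw [hk] at hlen
    obtain ⟨m, h1, h2⟩ := walk_len2 p hlen
    have huv : u0 ≠ v0 := by
      intro hh; rw [hh, SimpleGraph.dist_self] at hk; omega
    have hnuv : ¬ T.Adj u0 v0 := by
      intro hh; rw [SimpleGraph.dist_eq_one_iff_adj.mpr hh] at hk; omega
    have claimC : ∀ z, z ≠ m → z ≠ u0 → T.Adj z m := by
      intro z hz1 hz2
      have hdz : T.dist u0 z ≤ 2 := hk ▸ hmax' u0 z
      have hdz1 : 1 ≤ T.dist u0 z := hc.pos_dist_of_ne (Ne.symm hz2)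
      have : T.dist u0 z = 1 ∨ T.dist u0 z = 2 := by omega
      rcases this with hh | hh
      · exfalso
        have hz : T.Adj u0 z := SimpleGraph.dist_eq_one_iff_adj.mp hh
        have hzv : z ≠ v0 := by rintro rfl; exact hnuv hz
        have := path3 hac h2.symm h1.symm hz huv.symm (Ne.symm hzv) hz1.symm
        have h4 := hmax' v0 z
        omega
      · obtain ⟨pz, hpz, hlz⟩ := hc.exists_path_of_dist u0 z
        rw [hh] at hlz
        obtain ⟨w, hw1, hw2⟩ := walk_len2 pz hlz
        by_cases hwm : w = m
        · exact (hwm ▸ hw2).symm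
        · exfalso
          have hwv : w ≠ v0 := by rintro rfl; exact hnuv hw1
          have := path3 hac h2.symm h1.symm hw1 huv.symm (Ne.symm hwv) (Ne.symm hwm)
          have h4 := hmax' v0 w
          omega
    refine ⟨m, u0, h1.symm, ?_⟩
    intro a b hab2
    by_contra hcon
    push_neg at hcon
    obtain ⟨ha1, ha2, hb1, hb2⟩ := hcon
    exact no_triangle hac hab2 (claimC b hb1 hb2) (claimC a ha1 ha2)
  · -- diameter 3
    obtain ⟨p, hp, hlen⟩ := hc.exists_path_of_dist u0 v0
    rw [hk] at hlen
    obtain ⟨p1, p2, h1, h2, h3⟩ := walk_len3 p hlen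
    have huv : u0 ≠ v0 := by
      intro hh; rw [hh, SimpleGraph.dist_self] at hk; omega
    have hnuv : ¬ T.Adj u0 v0 := by
      intro hh; rw [SimpleGraph.dist_eq_one_iff_adj.mpr hh] at hk; omega
    have hp1v : p1 ≠ v0 := by rintro rfl; exact hnuv h1
    have hp2u : p2 ≠ u0 := by rintro rfl; exact hnuv h3
    have hnu2 : ¬ T.Adj u0 p2 := by
      intro hh
      have := path2 hac hh h3 huv
      omega
    have hn1v : ¬ T.Adj p1 v0 := by
      intro hh
      have := path2 hac h1 hh huv
      omega
    -- helper: any neighbor of u0 other than p1 leads to contradiction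
    have hnbu : ∀ w, T.Adj u0 w → w ≠ p1 → False := by
      intro w hw hwp1
      have hwp2 : w ≠ p2 := by rintro rfl; exact hnu2 hw
      have hwv : w ≠ v0 := by rintro rfl; exact hnuv hw
      have := path4 hac h3.symm h2.symm h1.symm hw hp1v.symm huv.symm (Ne.symm hwv)
        hp2u (Ne.symm hwp2) (Ne.symm hwp1)
      have h5 := hmax' v0 w
      omega
    have claimS : ∀ z, z ≠ p1 → z ≠ p2 → T.Adj z p1 ∨ T.Adj z p2 := by
      intro z hz1 hz2
      by_cases hzu : z = u0
      · subst hzu; exact Or.inl h1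
      by_cases hzv : z = v0
      · subst hzv; exact Or.inr h3.symm
      have hdz : T.dist u0 z ≤ 3 := hk ▸ hmax' u0 z
      have hdz1 : 1 ≤ T.dist u0 z := hc.pos_dist_of_ne (Ne.symm hzu)
      have hcase : T.dist u0 z = 1 ∨ T.dist u0 z = 2 ∨ T.dist u0 z = 3 := by omega
      rcases hcase with hh | hh | hh
      · exact absurd (hnbu z (SimpleGraph.dist_eq_one_iff_adj.mp hh) hz1) not_false
      · obtain ⟨pz, hpz, hlz⟩ := hc.exists_path_of_dist u0 z
        rw [hh] at hlz
        obtain ⟨w, hw1, hw2⟩ := walk_len2 pz hlz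
        by_cases hwm : w = p1
        · exact Or.inl (hwm ▸ hw2).symm
        · exact absurd (hnbu w hw1 hwm) not_false
      · obtain ⟨pz, hpz, hlz⟩ := hc.exists_path_of_dist u0 z
        rw [hh] at hlz
        obtain ⟨w1, w2, hw1, hw2, hw3⟩ := walk_len3 pz hlz
        have hw1p1 : w1 = p1 := by
          by_contra hcon
          exact hnbu w1 hw1 hcon
        subst hw1p1
        by_cases hw2p2 : w2 = p2
        · exact Or.inr (hw2p2 ▸ hw3).symm
        · exfalso
          have hw2v : w2 ≠ v0 := by rintro rfl; exact hn1v hw2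
          have hw2u : w2 ≠ u0 := by
            rintro rfl
            rw [SimpleGraph.dist_eq_one_iff_adj.mpr hw3] at hh
            omega
          have := path4 hac h3.symm h2.symm hw2 hw3 hp1v.symm (Ne.symm hw2v) (Ne.symm hzv)
            (Ne.symm hw2p2) hz2.symm hz1.symm
          have h5 := hmax' v0 z
          omega
    refine ⟨p1, p2, h2, ?_⟩
    intro a b hab2
    by_contra hcon
    push_neg at hcon
    obtain ⟨ha1, ha2, hb1, hb2⟩ := hcon
    rcases claimS a ha1 ha2 with ha | ha <;> rcases claimS b hb1 hb2 with hb | hb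
    · exact no_triangle hac hab2 hb ha
    · exact no_c4 hac hab2 hb h2.symm ha ha2 hb1
    · exact no_c4 hac hab2 hb h2 ha ha1 hb2
    · exact no_triangle hac hab2 hb ha

lemma center_del {V : Type*} [Fintype V] {T : SimpleGraph V} {c1 c2 : V}
    (hadj : T.Adj c1 c2)
    (hcov : ∀ a b, T.Adj a b → a = c1 ∨ a = c2 ∨ b = c1 ∨ b = c2)
    (hnc : ∀ u, T.Adj u c1 → T.Adj u c2 → False)
    {μ : ℝ} (hμ : μ ≠ 0)
    (P1 : (μ^2 - ((lvs T c1 c2).card : ℝ)) * (μ^2 - ((lvs T c2 c1).card : ℝ)) = μ^2)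
    (h2 : HasEig (delV T c1) μ) : False := by
  by_cases hE : ∃ x y : {u : V // u ≠ c1}, (delV T c1).Adj x y
  swap
  · push_neg at hE
    exact no_edges_no_eig (fun u w => hE u w) hμ h2
  obtain ⟨x, y, hxy⟩ := hE
  have hxy' : T.Adj x.val y.val := delV_adj.mp hxy
  have hl : ∃ l : V, l ≠ c2 ∧ l ≠ c1 ∧ T.Adj l c2 := by
    rcases hcov _ _ hxy' with hh | hh | hh | hh
    · exact absurd hh x.prop
    · refine ⟨y.val, ?_, y.prop, ?_⟩
      · rw [← hh]; exact hxy'.ne'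
      · rw [← hh]; exact hxy'.symm
    · exact absurd hh y.prop
    · refine ⟨x.val, ?_, x.prop, ?_⟩
      · rw [← hh]; exact hxy'.ne
      · rw [← hh]; exact hxy'
  obtain ⟨l, hl2, hl1, hlc2⟩ := hl
  have hlmem : l ∈ lvs T c2 c1 := by simp [lvs, hl2, hl1, hlc2]
  have hC2 : c2 ≠ c1 := hadj.ne'
  have hadj' : (delV T c1).Adj ⟨c2, hC2⟩ ⟨l, hl1⟩ := delV_adj.mpr hlc2.symm
  have hcov' : ∀ a b : {u : V // u ≠ c1}, (delV T c1).Adj a b →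
      a = ⟨c2, hC2⟩ ∨ a = ⟨l, hl1⟩ ∨ b = ⟨c2, hC2⟩ ∨ b = ⟨l, hl1⟩ := by
    intro a b hab
    rcases hcov _ _ (delV_adj.mp hab) with hh | hh | hh | hh
    · exact absurd hh a.prop
    · exact Or.inl (Subtype.ext hh)
    · exact absurd hh b.prop
    · exact Or.inr (Or.inr (Or.inl (Subtype.ext hh)))
  have hnc' : ∀ u, (delV T c1).Adj u ⟨c2, hC2⟩ → (delV T c1).Adj u ⟨l, hl1⟩ → False := by
    intro u hu1 hu2
    have h1 := delV_adj.mp hu1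
    have h2' := delV_adj.mp hu2
    rcases hcov _ _ h2' with hh | hh | hh | hh
    · exact u.prop hh
    · rw [hh] at h1; exact T.irrefl h1
    · exact hl1 hh
    · exact hl2 hh
  have P2 := struct_eig hadj' hcov' hnc' hμ h2
  have hb1 : 1 ≤ (lvs T c2 c1).card := Finset.card_pos.mpr ⟨l, hlmem⟩
  have e1 : (lvs (delV T c1) ⟨c2, hC2⟩ ⟨l, hl1⟩).card = (lvs T c2 c1).card - 1 := by
    rw [lvs_delV_card]
    have hset : (Finset.univ.filter (fun u : V => u ≠ c1 ∧ u ≠ c2 ∧ u ≠ l ∧ T.Adj u c2))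
        = (lvs T c2 c1).erase l := by
      ext u
      simp only [Finset.mem_filter, Finset.mem_univ, true_and, Finset.mem_erase, lvs]
      try tauto
    rw [hset, Finset.card_erase_of_mem hlmem]
  have e2 : (lvs (delV T c1) ⟨l, hl1⟩ ⟨c2, hC2⟩).card = 0 := by
    rw [lvs_delV_card, Finset.card_eq_zero]
    rw [Finset.eq_empty_iff_forall_notMem]
    intro u
    simp only [Finset.mem_filter, Finset.mem_univ, true_and, not_and]
    intro hu1 hu2 hu3 hu4
    rcases hcov _ _ hu4 with hh | hh | hh | hh
    · exact hu1 hh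
    · exact hu3 hh
    · exact hl1 hh
    · exact hl2 hh
  rw [e1, e2] at P2
  have hcast : (((lvs T c2 c1).card - 1 : ℕ) : ℝ) = ((lvs T c2 c1).card : ℝ) - 1 := by
    rw [Nat.cast_sub hb1]; simp
  rw [hcast] at P2
  have hμ2 : μ^2 ≠ 0 := pow_ne_zero 2 hμ
  have hbb : μ^2 = ((lvs T c2 c1).card : ℝ) := by
    have hz : (μ^2 - ((lvs T c2 c1).card : ℝ)) * μ^2 = 0 := by
      push_cast at P2
      linear_combination P2
    rcases mul_eq_zero.mp hz with hh | hh
    · linarith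
    · exact absurd hh hμ2
  rw [← hbb] at P1
  apply hμ2
  linear_combination -P1

lemma leaf_del {V : Type*} [Fintype V] {T : SimpleGraph V} {c1 c2 v : V}
    (hadj : T.Adj c1 c2)
    (hcov : ∀ a b, T.Adj a b → a = c1 ∨ a = c2 ∨ b = c1 ∨ b = c2)
    (hnc : ∀ u, T.Adj u c1 → T.Adj u c2 → False)
    {μ : ℝ} (hμ : μ ≠ 0)
    (P1 : (μ^2 - ((lvs T c1 c2).card : ℝ)) * (μ^2 - ((lvs T c2 c1).card : ℝ)) = μ^2)
    (hv : v ∈ lvs T c1 c2) (h2 : HasEig (delV T v) μ) : False := by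
  have hv' := hv
  simp only [lvs, Finset.mem_filter, Finset.mem_univ, true_and] at hv'
  obtain ⟨hv1, hv2, hv3⟩ := hv'
  have hC1 : c1 ≠ v := hv1.symm
  have hC2 : c2 ≠ v := hv2.symm
  have hadj' : (delV T v).Adj ⟨c1, hC1⟩ ⟨c2, hC2⟩ := delV_adj.mpr hadj
  have hcov' : ∀ a b : {u : V // u ≠ v}, (delV T v).Adj a b →
      a = ⟨c1, hC1⟩ ∨ a = ⟨c2, hC2⟩ ∨ b = ⟨c1, hC1⟩ ∨ b = ⟨c2, hC2⟩ := by
    intro a b hab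
    rcases hcov _ _ (delV_adj.mp hab) with hh | hh | hh | hh
    · exact Or.inl (Subtype.ext hh)
    · exact Or.inr (Or.inl (Subtype.ext hh))
    · exact Or.inr (Or.inr (Or.inl (Subtype.ext hh)))
    · exact Or.inr (Or.inr (Or.inr (Subtype.ext hh)))
  have hnc' : ∀ u, (delV T v).Adj u ⟨c1, hC1⟩ → (delV T v).Adj u ⟨c2, hC2⟩ → False := by
    intro u hu1 hu2
    exact hnc u.val (delV_adj.mp hu1) (delV_adj.mp hu2)
  have P2 := struct_eig hadj' hcov' hnc' hμ h2
  have ha1 : 1 ≤ (lvs T c1 c2).card := Finset.card_pos.mpr ⟨v, hv⟩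
  have e1 : (lvs (delV T v) ⟨c1, hC1⟩ ⟨c2, hC2⟩).card = (lvs T c1 c2).card - 1 := by
    rw [lvs_delV_card]
    have hset : (Finset.univ.filter (fun u : V => u ≠ v ∧ u ≠ c1 ∧ u ≠ c2 ∧ T.Adj u c1))
        = (lvs T c1 c2).erase v := by
      ext u
      simp only [Finset.mem_filter, Finset.mem_univ, true_and, Finset.mem_erase, lvs]
      try tauto
    rw [hset, Finset.card_erase_of_mem hv]
  have e2 : (lvs (delV T v) ⟨c2, hC2⟩ ⟨c1, hC1⟩).card = (lvs T c2 c1).card := by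
    rw [lvs_delV_card]
    unfold lvs
    refine card_filter_ext (fun u => ?_)
    constructor
    · rintro ⟨h1, h2', h3, h4⟩; exact ⟨h2', h3, h4⟩
    · rintro ⟨h2', h3, h4⟩
      refine ⟨?_, h2', h3, h4⟩
      rintro rfl
      exact hnc u hv3 h4
  rw [e1, e2] at P2
  have hcast : (((lvs T c1 c2).card - 1 : ℕ) : ℝ) = ((lvs T c1 c2).card : ℝ) - 1 := by
    rw [Nat.cast_sub ha1]; simp
  rw [hcast] at P2
  have hμ2 : μ^2 ≠ 0 := pow_ne_zero 2 hμ
  have hB : μ^2 - ((lvs T c2 c1).card : ℝ) = 0 := by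
    linear_combination P2 - P1
  apply hμ2
  rw [hB, mul_zero] at P1
  exact P1.symm

theorem stmt4 {V : Type*} [Fintype V] (T : SimpleGraph V) (hT : T.IsTree)
    (hd : ∀ u v : V, T.dist u v ≤ 3) (μ : ℝ) (hμ : μ ≠ 0) (h : HasEig T μ) :
    ∀ v : V, ¬ HasEig (delV T v) μ := by
  intro v hvE
  by_cases hE : ∃ a b : V, T.Adj a b
  swap
  · push_neg at hE
    exact no_edges_no_eig (fun u w => hE u w) hμ h
  obtain ⟨a0, b0, hab⟩ := hE
  obtain ⟨c1, c2, hadj, hcov⟩ := classify hT.1 hT.2 hd hab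
  have hnc : ∀ u, T.Adj u c1 → T.Adj u c2 → False :=
    fun u h1 h2 => no_triangle hT.2 h1 hadj h2
  have P1 := struct_eig hadj hcov hnc hμ h
  have hcov2 := cov_swap hcov
  have hnc2 := nc_swap hnc
  have P1' := struct_eig hadj.symm hcov2 hnc2 hμ h
  by_cases hv1 : v = c1
  · subst hv1; exact center_del hadj hcov hnc hμ P1 hvE
  by_cases hv2 : v = c2
  · subst hv2; exact center_del hadj.symm hcov2 hnc2 hμ P1' hvE
  have hvadj : T.Adj v c1 ∨ T.Adj v c2 := by
    have hr : 1 ≤ T.dist v c1 := hT.1.pos_dist_of_ne hv1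
    obtain ⟨p, hp, hlen⟩ := hT.1.exists_path_of_dist v c1
    cases p with
    | nil => exact absurd rfl hv1
    | cons hadj2 q =>
      rcases hcov _ _ hadj2 with hh | hh | hh | hh
      · exact absurd hh hv1
      · exact absurd hh hv2
      · exact Or.inl (hh ▸ hadj2)
      · exact Or.inr (hh ▸ hadj2)
  rcases hvadj with hva | hva
  · exact leaf_del hadj hcov hnc hμ P1 (by simp [lvs, hv1, hv2, hva]) hvE
  · exact leaf_del hadj.symm hcov2 hnc2 hμ P1' (by simp [lvs, hv1, hv2, hva]) hvE
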